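/- Let (V, b) be a nondegenerate symmetric bilinear space over a field k of characteristic ≠ 2, W ⊆ O(V,b) a finite reflection group, and Δ ⊆ V a root system for W, i.e. a finite W-invariant set of anisotropic vectors such that {s_α | α ∈ Δ} is exactly the set of reflections in W. Suppose that for every x ∈ V with x ∉ ⋃_{α∈Δ} ker(b(·,α)), the stabilizer W_x = {w ∈ W | w(x) = x} is generated by the reflections it contains. Then ⋃_{α∈Δ} ker(b(·,α)) = ⋃_{w∈W, w≠id} ker(w - id_V). -/
import Mathlib


/-- For a finite orthogonal reflection group `W` with root system `Δ`, assuming the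
Chevalley–Shephard–Todd–Bourbaki property that stabilizers of points outside all root
hyperplanes are generated by the reflections they contain, the union of the root
hyperplanes equals the union of the fixed spaces of the nontrivial elements of `W`. -/
theorem union_hyperplanes_eq_union_fixed {k V : Type*} [Field k] [AddCommGroup V] [Module k V]
    [FiniteDimensional k V] (h2 : (2 : k) ≠ 0)
    (B : V →ₗ[k] V →ₗ[k] k)
    (hsymm : ∀ x y : V, B x y = B y x)
    (hnd : ∀ x : V, (∀ y : V, B x y = 0) → x = 0)
    (W : Subgroup (V ≃ₗ[k] V)) (hWfin : (W : Set (V ≃ₗ[k] V)).Finite)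
    (hWO : ∀ w ∈ W, ∀ x y : V, B (w x) (w y) = B x y)
    (Δ : Set V) (hΔfin : Δ.Finite)
    (hani : ∀ α ∈ Δ, B α α ≠ 0)
    (hWinv : ∀ w ∈ W, ∀ α ∈ Δ, w α ∈ Δ)
    -- every root gives a reflection of `W`
    (hrefl : ∀ α ∈ Δ, ∃ s ∈ W, ∀ x : V, s x = x - ((2 * B α x) / (B α α)) • α)
    -- every reflection of `W` comes from a root in `Δ`
    (hreflonly : ∀ s ∈ W,
      Module.finrank k ↥(LinearMap.range ((s : V →ₗ[k] V) - LinearMap.id)) = 1 →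
      ∃ α ∈ Δ, ∀ x : V, s x = x - ((2 * B α x) / (B α α)) • α)
    -- `W` is generated by its reflections
    (hWgen : W ≤ Subgroup.closure
      {s : V ≃ₗ[k] V | s ∈ W ∧ ∃ α ∈ Δ, ∀ x : V, s x = x - ((2 * B α x) / (B α α)) • α})
    -- stabilizers of points off the root hyperplanes are generated by their reflections
    (hstab : ∀ x : V, (∀ α ∈ Δ, B α x ≠ 0) → ∀ w ∈ W, w x = x →
      w ∈ Subgroup.closure
        {s : V ≃ₗ[k] V | s ∈ W ∧ s x = x ∧
          ∃ α ∈ Δ, ∀ y : V, s y = y - ((2 * B α y) / (B α α)) • α}) :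
    {x : V | ∃ α ∈ Δ, B α x = 0} =
      {x : V | ∃ w ∈ W, w ≠ (1 : V ≃ₗ[k] V) ∧ w x = x} := by
  ext x
  simp only [Set.mem_setOf_eq]
  constructor
  · rintro ⟨α, hα, hBx⟩
    obtain ⟨s, hsW, hs⟩ := hrefl α hα
    have hα0 : α ≠ 0 := fun h => hani α hα (by simp [h])
    refine ⟨s, hsW, ?_, ?_⟩
    · intro h1
      have hsa := hs α
      rw [h1] at hsa
      have hsa2 : α = α - ((2 * B α α) / (B α α)) • α := hsa
      have hc : ((2 * B α α) / (B α α)) • α = 0 := sub_eq_self.mp hsa2.symm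
      rw [mul_div_assoc, div_self (hani α hα), mul_one] at hc
      rcases smul_eq_zero.mp hc with h | h
      · exact h2 h
      · exact hα0 h
    · rw [hs, hBx]
      simp
  · rintro ⟨w, hwW, hw1, hwx⟩
    by_contra hno
    push_neg at hno
    have hmem := hstab x hno w hwW hwx
    have hempty : {s : V ≃ₗ[k] V | s ∈ W ∧ s x = x ∧
        ∃ α ∈ Δ, ∀ y : V, s y = y - ((2 * B α y) / (B α α)) • α} = ∅ := by
      ext s
      simp only [Set.mem_setOf_eq, Set.mem_empty_iff_false, iff_false, not_and, not_exists]
      rintro hsW hsx α hα hs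
      have hα0 : α ≠ 0 := fun h => hani α hα (by simp [h])
      have hsa := hs x
      rw [hsx] at hsa
      have hc : ((2 * B α x) / (B α α)) • α = 0 := sub_eq_self.mp hsa.symm
      rcases smul_eq_zero.mp hc with h | h
      · rcases div_eq_zero_iff.mp h with h1 | h1
        · rcases mul_eq_zero.mp h1 with h3 | h3
          · exact h2 h3
          · exact hno α hα h3
        · exact hani α hα h1
      · exact hα0 h
    rw [hempty, Subgroup.closure_empty] at hmem
    exact hw1 (Subgroup.mem_bot.mp hmem)
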